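/- For every A > 0 there exists a constant M = M(A) such that for all α ∈ [0, A], √(2cosh(α)² − 2φ(α)) + sinh(α) ≤ M · φ(α) · √(1 − 1/φ(α)²), where φ(α) = ∫₀¹ cosh(α cos(2πs)) ds. -/

import Mathlib

open Real MeasureTheory Set

noncomputable def phi (α : ℝ) : ℝ := ∫ s in (0:ℝ)..1, Real.cosh (α * Real.cos (2 * Real.pi * s))

lemma cosh_quad_aux : ∀ x : ℝ, 0 ≤ x → 1 + x ^ 2 / 2 ≤ Real.cosh x := by
  intro x hx
  have hmono : MonotoneOn (fun t : ℝ => Real.cosh t - 1 - t ^ 2 / 2) (Set.Ici 0) := by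
    apply monotoneOn_of_deriv_nonneg (convex_Ici 0)
    · fun_prop
    · fun_prop
    · intro t ht
      rw [interior_Ici] at ht
      have hd : HasDerivAt (fun t : ℝ => Real.cosh t - 1 - t ^ 2 / 2)
          (Real.sinh t - (2 * t ^ 1) / 2) t := by
        exact ((Real.hasDerivAt_cosh t).sub_const 1).sub ((hasDerivAt_pow 2 t).div_const 2)
      rw [hd.deriv]
      have := Real.self_le_sinh_iff.mpr (le_of_lt ht)
      simp only [pow_one]
      linarith
  have h0 := hmono (Set.self_mem_Ici) (Set.mem_Ici.mpr hx) hx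
  simp only [Real.cosh_zero] at h0
  norm_num at h0
  linarith

lemma cosh_quad (x : ℝ) : 1 + x ^ 2 / 2 ≤ Real.cosh x := by
  rcases le_total 0 x with h | h
  · exact cosh_quad_aux x h
  · have := cosh_quad_aux (-x) (by linarith)
    simpa [Real.cosh_neg] using this

lemma cos_sq_integral : ∫ s in (0:ℝ)..1, Real.cos (2 * Real.pi * s) ^ 2 = 1 / 2 := by
  have hπ : (Real.pi : ℝ) ≠ 0 := Real.pi_ne_zero
  have hF : ∀ s ∈ Set.uIcc (0:ℝ) 1, HasDerivAt
      (fun s : ℝ => s / 2 + Real.sin (4 * Real.pi * s) / (8 * Real.pi))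
      (Real.cos (2 * Real.pi * s) ^ 2) s := by
    intro s _
    have h1 : HasDerivAt (fun s : ℝ => s / 2) (1 / 2) s := by
      simpa using (hasDerivAt_id s).div_const 2
    have h2 : HasDerivAt (fun s : ℝ => Real.sin (4 * Real.pi * s))
        (Real.cos (4 * Real.pi * s) * (4 * Real.pi)) s := by
      have := (Real.hasDerivAt_sin (4 * Real.pi * s)).comp s
        ((hasDerivAt_id s).const_mul (4 * Real.pi))
      simpa [Function.comp_def, mul_comm] using this
    have h3 : HasDerivAt (fun s : ℝ => s / 2 + Real.sin (4 * Real.pi * s) / (8 * Real.pi))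
        (1 / 2 + Real.cos (4 * Real.pi * s) * (4 * Real.pi) / (8 * Real.pi)) s :=
      h1.add (h2.div_const (8 * Real.pi))
    convert h3 using 1
    rw [Real.cos_sq]
    have : 2 * (2 * Real.pi * s) = 4 * Real.pi * s := by ring
    rw [this]
    field_simp
    ring
  have hcont : IntervalIntegrable (fun s => Real.cos (2 * Real.pi * s) ^ 2)
      MeasureTheory.volume 0 1 := by
    apply Continuous.intervalIntegrable; fun_prop
  have := intervalIntegral.integral_eq_sub_of_hasDerivAt hF hcont
  have h4 : Real.sin (4 * Real.pi * 1) = 0 := by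
    rw [show (4 * Real.pi * 1 : ℝ) = (4:ℕ) * Real.pi by push_cast; ring]
    exact Real.sin_nat_mul_pi 4
  have h00 : Real.sin (4 * Real.pi * 0) = 0 := by norm_num
  rw [this, h4, h00]
  norm_num

lemma phi_ge (α : ℝ) : 1 + α ^ 2 / 4 ≤ phi α := by
  have h1 : (∫ s in (0:ℝ)..1, (1 + (α * Real.cos (2 * Real.pi * s)) ^ 2 / 2)) = 1 + α ^ 2 / 4 := by
    have : ∀ s : ℝ, 1 + (α * Real.cos (2 * Real.pi * s)) ^ 2 / 2
        = 1 + (α ^ 2 / 2) * Real.cos (2 * Real.pi * s) ^ 2 := by intro s; ring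
    simp_rw [this]
    rw [intervalIntegral.integral_add (by apply Continuous.intervalIntegrable; fun_prop)
      (by apply Continuous.intervalIntegrable; fun_prop),
      intervalIntegral.integral_const_mul, cos_sq_integral]
    simp
    ring
  rw [← h1]
  apply intervalIntegral.integral_mono_on (by norm_num)
    (by apply Continuous.intervalIntegrable; fun_prop)
    (by apply Continuous.intervalIntegrable; fun_prop)
  intro s _
  exact cosh_quad _

theorem amplitude_bound :
    ∀ A : ℝ, 0 < A → ∃ M : ℝ, ∀ α ∈ Set.Icc (0:ℝ) A,
      Real.sqrt (2 * Real.cosh α ^ 2 - 2 * phi α) + Real.sinh α ≤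
        M * phi α * Real.sqrt (1 - 1 / phi α ^ 2) := by
  intro A hA
  refine ⟨(1 + Real.sqrt 2) * Real.sqrt 2 * Real.cosh A, ?_⟩
  rintro α ⟨hα0, hαA⟩
  set M := (1 + Real.sqrt 2) * Real.sqrt 2 * Real.cosh A with hM
  have hφ1 : 1 ≤ phi α := by nlinarith [phi_ge α, sq_nonneg α]
  have hφpos : 0 < phi α := by linarith
  have hsinh : 0 ≤ Real.sinh α := Real.sinh_nonneg_iff.mpr hα0
  have hs2 : (0:ℝ) < Real.sqrt 2 := Real.sqrt_pos.mpr (by norm_num)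
  have hs2sq : Real.sqrt 2 * Real.sqrt 2 = 2 := Real.mul_self_sqrt (by norm_num)
  -- Step A : sqrt term bounded by √2 sinh α
  have stepA : Real.sqrt (2 * Real.cosh α ^ 2 - 2 * phi α) ≤ Real.sqrt 2 * Real.sinh α := by
    have h1 : 2 * Real.cosh α ^ 2 - 2 * phi α ≤ 2 * Real.sinh α ^ 2 := by
      have := Real.cosh_sq α
      nlinarith
    calc Real.sqrt (2 * Real.cosh α ^ 2 - 2 * phi α)
        ≤ Real.sqrt (2 * Real.sinh α ^ 2) := Real.sqrt_le_sqrt h1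
      _ = Real.sqrt 2 * Real.sinh α := by
          rw [Real.sqrt_mul (by norm_num), Real.sqrt_sq hsinh]
  -- Step B : sinh α ≤ α * cosh A
  have stepB : Real.sinh α ≤ α * Real.cosh A := by
    have hmono : MonotoneOn (fun t : ℝ => t * Real.cosh A - Real.sinh t) (Set.Icc 0 A) := by
      apply monotoneOn_of_deriv_nonneg (convex_Icc 0 A)
      · fun_prop
      · fun_prop
      · intro t ht
        rw [interior_Icc] at ht
        have hd : HasDerivAt (fun t : ℝ => t * Real.cosh A - Real.sinh t)
            (Real.cosh A - Real.cosh t) t := by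
          exact (hasDerivAt_mul_const (Real.cosh A)).sub (Real.hasDerivAt_sinh t)
        rw [hd.deriv]
        have : Real.cosh t ≤ Real.cosh A := by
          rw [Real.cosh_le_cosh, abs_of_pos ht.1, abs_of_pos hA]
          exact le_of_lt ht.2
        linarith
    have h0 := hmono (Set.left_mem_Icc.mpr hA.le) ⟨hα0, hαA⟩ hα0
    simp only [Real.sinh_zero, zero_mul, sub_zero] at h0
    linarith
  -- Step C : RHS rewrite
  have stepC : Real.sqrt (phi α ^ 2 - 1) = phi α * Real.sqrt (1 - 1 / phi α ^ 2) := by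
    have heq : phi α ^ 2 * (1 - 1 / phi α ^ 2) = phi α ^ 2 - 1 := by
      field_simp
    rw [← heq, Real.sqrt_mul (sq_nonneg _), Real.sqrt_sq hφpos.le]
  -- Step D : lower bound for sqrt(phi^2 - 1)
  have stepD : α / Real.sqrt 2 ≤ Real.sqrt (phi α ^ 2 - 1) := by
    have h1 : α ^ 2 / 2 ≤ phi α ^ 2 - 1 := by nlinarith [phi_ge α, sq_nonneg α, sq_nonneg (α^2)]
    calc α / Real.sqrt 2 = Real.sqrt (α ^ 2 / 2) := by
          rw [Real.sqrt_div (sq_nonneg α), Real.sqrt_sq hα0]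
      _ ≤ Real.sqrt (phi α ^ 2 - 1) := Real.sqrt_le_sqrt h1
  have hkey : M * (α / Real.sqrt 2) = (1 + Real.sqrt 2) * Real.cosh A * α := by
    rw [hM]; field_simp
  have hcoshA : (1:ℝ) ≤ Real.cosh A := Real.one_le_cosh A
  have hM0 : 0 ≤ M := by positivity
  calc Real.sqrt (2 * Real.cosh α ^ 2 - 2 * phi α) + Real.sinh α
      ≤ Real.sqrt 2 * Real.sinh α + Real.sinh α := by linarith
    _ = (1 + Real.sqrt 2) * Real.sinh α := by ring
    _ ≤ (1 + Real.sqrt 2) * (α * Real.cosh A) := by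
        apply mul_le_mul_of_nonneg_left stepB (by positivity)
    _ = M * (α / Real.sqrt 2) := by rw [hkey]; ring
    _ ≤ M * Real.sqrt (phi α ^ 2 - 1) := mul_le_mul_of_nonneg_left stepD hM0
    _ = M * phi α * Real.sqrt (1 - 1 / phi α ^ 2) := by rw [stepC]; ring
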